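/- The Lovász number is an upper bound on the independence number: for every finite simple graph G, α(G) ≤ ϑ(G). -/

import Mathlib

open Finset

namespace SimpleGraph

variable {V W : Type*}

/-- The strong graph product. -/
def strongProd (G : SimpleGraph V) (H : SimpleGraph W) : SimpleGraph (V × W) where
  Adj x y := x ≠ y ∧ (x.1 = y.1 ∨ G.Adj x.1 y.1) ∧ (x.2 = y.2 ∨ H.Adj x.2 y.2)
  symm := by
    constructor
    rintro x y ⟨hne, h1, h2⟩
    exact ⟨hne.symm, h1.imp Eq.symm (fun h => G.adj_symm h), h2.imp Eq.symm (fun h => H.adj_symm h)⟩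
  loopless := by constructor; rintro x ⟨hne, -, -⟩; exact hne rfl

/-- The disjunctive graph product. -/
def disjProd (G : SimpleGraph V) (H : SimpleGraph W) : SimpleGraph (V × W) where
  Adj x y := G.Adj x.1 y.1 ∨ H.Adj x.2 y.2
  symm := ⟨fun _ _ h => h.imp (fun h => G.adj_symm h) (fun h => H.adj_symm h)⟩
  loopless := ⟨fun x h => h.elim (G.irrefl (v := x.1)) (H.irrefl (v := x.2))⟩

/-- A finite set of vertices is independent if no two of its members are adjacent. -/
def IsIndep (G : SimpleGraph V) (s : Finset V) : Prop :=
  ∀ ⦃v⦄, v ∈ s → ∀ ⦃w⦄, w ∈ s → ¬ G.Adj v w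

/-- The independence number. -/
noncomputable def alpha (G : SimpleGraph V) [Fintype V] : ℕ :=
  sSup {n | ∃ s : Finset V, G.IsIndep s ∧ s.card = n}

/-- The fractional packing number. -/
noncomputable def alphaStar (G : SimpleGraph V) [Fintype V] : ℝ :=
  sSup {x | ∃ t : V → ℝ, (∀ v, 0 ≤ t v) ∧
    (∀ C : Finset V, G.IsClique (C : Set V) → ∑ v ∈ C, t v ≤ 1) ∧ x = ∑ v, t v}

/-- The Lovász number. -/
noncomputable def lovTheta (G : SimpleGraph V) [Fintype V] : ℝ :=
  sSup {x | ∃ B : Matrix V V ℝ, B.PosSemidef ∧ B.trace = 1 ∧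
    (∀ v w, G.Adj v w → B v w = 0) ∧ x = ∑ v, ∑ w, B v w}

/-- Schrijver's variant of the Lovász number. -/
noncomputable def thetaMinus (G : SimpleGraph V) [Fintype V] : ℝ :=
  sSup {x | ∃ B : Matrix V V ℝ, B.PosSemidef ∧ B.trace = 1 ∧ (∀ v w, 0 ≤ B v w) ∧
    (∀ v w, G.Adj v w → B v w = 0) ∧ x = ∑ v, ∑ w, B v w}

/-- Szegedy's variant of the Lovász number. -/
noncomputable def thetaPlus (G : SimpleGraph V) [Fintype V] : ℝ :=
  sSup {x | ∃ B : Matrix V V ℝ, B.PosSemidef ∧ B.trace = 1 ∧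
    (∀ v w, G.Adj v w → B v w ≤ 0) ∧ x = ∑ v, ∑ w, B v w}

/-- The clique covering number. -/
noncomputable def cliqueCoverNum (G : SimpleGraph V) [Fintype V] : ℕ :=
  sInf {n | ∃ C : Fin n → Finset V, (∀ i, G.IsClique (C i : Set V)) ∧ ∀ v, ∃ i, v ∈ C i}

/-- The blow-up of a graph along integer vertex weights. -/
def blup (G : SimpleGraph V) (p : V → ℕ) : SimpleGraph (Σ v, Fin (p v)) where
  Adj x y := G.Adj x.1 y.1
  symm := ⟨fun _ _ h => G.adj_symm h⟩
  loopless := ⟨fun x h => G.irrefl (v := x.1) h⟩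

/-- The weighted independence number (integer weights). -/
noncomputable def alphaWNat (G : SimpleGraph V) [Fintype V] (p : V → ℕ) : ℕ :=
  sSup {n | ∃ s : Finset V, G.IsIndep s ∧ n = ∑ v ∈ s, p v}

/-- The weighted independence number (real weights). -/
noncomputable def alphaW (G : SimpleGraph V) [Fintype V] (p : V → ℝ) : ℝ :=
  sSup {x | ∃ s : Finset V, G.IsIndep s ∧ x = ∑ v ∈ s, p v}

end SimpleGraph

open SimpleGraph
open scoped RealInnerProductSpace

theorem alpha_le_lovTheta {V : Type*} [Fintype V] (G : SimpleGraph V) :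
    (G.alpha : ℝ) ≤ G.lovTheta := by
  classical
  set S := {x | ∃ B : Matrix V V ℝ, B.PosSemidef ∧ B.trace = 1 ∧
    (∀ v w, G.Adj v w → B v w = 0) ∧ x = ∑ v, ∑ w, B v w} with hS
  have hθ : G.lovTheta = sSup S := by rw [hS]; rfl
  have hbdd : BddAbove S := by
    refine ⟨(Fintype.card V : ℝ), ?_⟩
    rintro x ⟨B, hB, htr, -, rfl⟩
    have htr' : ∑ v : V, B v v = 1 := htr
    have key : ∀ v w, B v w ≤ (B v v + B w w) / 2 := by
      intro v w
      have h := hB.dotProduct_mulVec_nonneg (Pi.single v 1 - Pi.single w 1)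
      have hsym : B w v = B v w := by
        have := hB.1.apply v w
        simpa using this
      simp only [star_trivial, Matrix.mulVec_sub, Matrix.mulVec_single,
        dotProduct_sub, sub_dotProduct, single_dotProduct,
        Pi.sub_apply, mul_one, one_mul, MulOpposite.op_one, one_smul, Matrix.col_apply] at h
      nlinarith [h]
    have h1 : ∑ v : V, ∑ _w : V, B v v = (Fintype.card V : ℝ) := by
      simp only [Finset.sum_const, Finset.card_univ, nsmul_eq_mul]
      rw [← Finset.mul_sum, htr', mul_one]
    have h2 : ∑ v : V, ∑ w : V, B w w = (Fintype.card V : ℝ) := by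
      rw [Finset.sum_comm]
      simpa using h1
    calc ∑ v, ∑ w, B v w ≤ ∑ v : V, ∑ w : V, (B v v + B w w) / 2 := by
          apply Finset.sum_le_sum; intro v _
          exact Finset.sum_le_sum fun w _ => key v w
      _ = (Fintype.card V : ℝ) := by
          have inner : ∀ v : V, ∑ w : V, (B v v + B w w) / 2
              = ((∑ _w : V, B v v) + ∑ w : V, B w w) / 2 := by
            intro v
            rw [← Finset.sum_div, Finset.sum_add_distrib]
          simp only [inner]
          rw [← Finset.sum_div, Finset.sum_add_distrib, h1, h2]
          ring
  by_cases hV : Nonempty V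
  · have hbddN : BddAbove {n | ∃ s : Finset V, G.IsIndep s ∧ s.card = n} := by
      refine ⟨Fintype.card V, ?_⟩
      rintro n ⟨s, -, rfl⟩
      exact s.card_le_univ
    have hneN : {n | ∃ s : Finset V, G.IsIndep s ∧ s.card = n}.Nonempty :=
      ⟨0, ∅, fun v hv => absurd hv (Finset.notMem_empty v), rfl⟩
    obtain ⟨s, hs, hcard⟩ := Nat.sSup_mem hneN hbddN
    have hcard' : s.card = G.alpha := hcard
    have h1 : 1 ≤ G.alpha := by
      obtain ⟨v⟩ := hV
      refine le_csSup hbddN ⟨{v}, ?_, Finset.card_singleton v⟩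
      intro a ha b hb
      simp only [Finset.mem_singleton] at ha hb
      rw [ha, hb]; exact G.irrefl
    have hpos : 0 < s.card := by omega
    have hposR : (0 : ℝ) < (s.card : ℝ) := by exact_mod_cast hpos
    set c : ℝ := (s.card : ℝ)⁻¹ with hc
    have hcnn : 0 ≤ c := le_of_lt (inv_pos.mpr hposR)
    set χ : V → ℝ := fun v => if v ∈ s then 1 else 0 with hχ
    set B : Matrix V V ℝ := Matrix.of fun v w => c * (χ v * χ w) with hBdef
    have hχsq : ∀ v, χ v * χ v = χ v := by
      intro v; by_cases hv : v ∈ s <;> simp [hχ, hv]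
    have hχsum : ∑ v, χ v = (s.card : ℝ) := by
      simp [hχ, Finset.sum_ite_mem, Finset.univ_inter]
    have hmem : ((s.card : ℝ)) ∈ S := by
      refine ⟨B, Matrix.posSemidef_iff_dotProduct_mulVec.mpr ⟨?_, ?_⟩, ?_, ?_, ?_⟩
      · refine Matrix.ext fun v w => ?_
        simp only [hBdef, Matrix.conjTranspose_apply, Matrix.of_apply, star_trivial]
        ring
      · intro x
        have heq : dotProduct (star x) (Matrix.mulVec B x)
            = c * ((∑ j, χ j * x j) * (∑ j, χ j * x j)) := by
          simp only [star_trivial, dotProduct, Matrix.mulVec, hBdef,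
            Matrix.of_apply]
          rw [Finset.sum_mul_sum, Finset.mul_sum]
          apply Finset.sum_congr rfl
          intro i _
          rw [Finset.mul_sum, Finset.mul_sum]
          apply Finset.sum_congr rfl
          intro j _
          ring
        rw [heq]
        exact mul_nonneg hcnn (mul_self_nonneg _)
      · show ∑ v, B v v = 1
        simp only [hBdef, Matrix.of_apply]
        calc ∑ v, c * (χ v * χ v) = ∑ v, c * χ v := by
              apply Finset.sum_congr rfl; intro v _; rw [hχsq]
          _ = c * (s.card : ℝ) := by rw [← Finset.mul_sum, hχsum]
          _ = 1 := inv_mul_cancel₀ (ne_of_gt hposR)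
      · intro v w hadj
        have hvw : ¬ (v ∈ s ∧ w ∈ s) := fun ⟨hv, hw⟩ => hs hv hw hadj
        simp only [hBdef, Matrix.of_apply, hχ]
        by_cases hv1 : v ∈ s <;> by_cases hv2 : w ∈ s <;>
          simp [hv1, hv2] at hvw ⊢
      · refine Eq.symm ?_
        calc ∑ v, ∑ w, B v w = c * ((∑ v, χ v) * (∑ w, χ w)) := by
              rw [Finset.sum_mul_sum, Finset.mul_sum]
              apply Finset.sum_congr rfl; intro v _
              rw [Finset.mul_sum]
              apply Finset.sum_congr rfl; intro w _
              simp only [hBdef, Matrix.of_apply]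
              try ring
          _ = (s.card : ℝ) := by
              rw [hχsum, hc]
              field_simp
    rw [hθ, ← hcard']
    exact le_csSup hbdd hmem
  · haveI hE : IsEmpty V := not_nonempty_iff.mp hV
    have h0 : G.alpha = 0 := by
      have hset : {n | ∃ s : Finset V, G.IsIndep s ∧ s.card = n} = {0} := by
        ext n
        simp only [Set.mem_setOf_eq, Set.mem_singleton_iff]
        constructor
        · rintro ⟨s, -, rfl⟩
          have : s = ∅ := Finset.eq_empty_of_isEmpty s
          simp [this]
        · rintro rfl
          exact ⟨∅, fun v hv => absurd hv (Finset.notMem_empty v), rfl⟩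
      have : G.alpha = sSup {n | ∃ s : Finset V, G.IsIndep s ∧ s.card = n} := rfl
      rw [this, hset, csSup_singleton]
    have hSe : S = ∅ := by
      ext x
      simp only [hS, Set.mem_setOf_eq, Set.mem_empty_iff_false, iff_false]
      rintro ⟨B, -, htr, -, -⟩
      have : B.trace = 0 := by simp [Matrix.trace]
      rw [this] at htr
      exact one_ne_zero htr.symm
    rw [h0, hθ, hSe, Real.sSup_empty]
    norm_num
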